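/- The 4-tensor R defined on ℝ^{3s} by R(U_a,U_b,U_c,U_d) := R¹(U_a,U_b,U_c,U_d) and R(U_a,U_b,U_c,T_d) = R(U_a,U_b,T_c,U_d) = R(U_a,T_b,U_c,U_d) = R(T_a,U_b,U_c,U_d) := R²(U_a,U_b,U_c,U_d), with all other components zero, satisfies the symmetries of an algebraic curvature tensor: antisymmetry in the first two slots, symmetry under interchange of the first and second pairs, and the first Bianchi identity. -/
import Mathlib


open scoped BigOperators

/-- A (component-level) algebraic curvature tensor: antisymmetry in the first
two slots, pair-interchange symmetry, and the first Bianchi identity. -/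
def IsACT {ι : Type*} (F : ι → ι → ι → ι → ℝ) : Prop :=
  (∀ x y z w, F x y z w = - F y x z w) ∧
  (∀ x y z w, F x y z w = F z w x y) ∧
  (∀ x y z w, F x y z w + F y z x w + F z x y w = 0)

/-- Basis of `ℝ^{3s}`: `(0, a) = U_a`, `(1, a) = V_a`, `(2, a) = T_a`. -/
abbrev BasisIdx (s : ℕ) := Fin 3 × Fin s

/-- The tensor of Lemma 2.1: `R(U_a,U_b,U_c,U_d) = R¹_{abcd}`, components with
exactly one `T` index (and the other three `U` indices) equal `R²_{abcd}`
(replacing the `T` index by the corresponding `U` index), all else zero. -/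
def bigR {s : ℕ} (R1 R2 : Fin s → Fin s → Fin s → Fin s → ℝ) :
    BasisIdx s → BasisIdx s → BasisIdx s → BasisIdx s → ℝ :=
  fun x y z w =>
    if x.1 = 0 ∧ y.1 = 0 ∧ z.1 = 0 ∧ w.1 = 0 then R1 x.2 y.2 z.2 w.2
    else if (x.1 = 2 ∧ y.1 = 0 ∧ z.1 = 0 ∧ w.1 = 0) ∨ (x.1 = 0 ∧ y.1 = 2 ∧ z.1 = 0 ∧ w.1 = 0) ∨
            (x.1 = 0 ∧ y.1 = 0 ∧ z.1 = 2 ∧ w.1 = 0) ∨ (x.1 = 0 ∧ y.1 = 0 ∧ z.1 = 0 ∧ w.1 = 2)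
      then R2 x.2 y.2 z.2 w.2
    else 0

/-- the tensor `R = R(R¹, R²)` of Lemma 2.1 satisfies the
symmetries of an algebraic curvature tensor. -/
theorem stmt0 (s : ℕ) (hs : 2 ≤ s) (R1 R2 : Fin s → Fin s → Fin s → Fin s → ℝ)
    (h1 : IsACT R1) (h2 : IsACT R2) : IsACT (bigR R1 R2) := by
  obtain ⟨h1a, h1b, h1c⟩ := h1
  obtain ⟨h2a, h2b, h2c⟩ := h2
  refine ⟨?_, ?_, ?_⟩ <;>
    rintro ⟨x1, x2⟩ ⟨y1, y2⟩ ⟨z1, z2⟩ ⟨w1, w2⟩ <;>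
    fin_cases x1 <;> fin_cases y1 <;> fin_cases z1 <;> fin_cases w1 <;>
    simp [bigR] <;>
    first
      | linarith [h1a x2 y2 z2 w2, h1b x2 y2 z2 w2, h1c x2 y2 z2 w2]
      | linarith [h2a x2 y2 z2 w2, h2b x2 y2 z2 w2, h2c x2 y2 z2 w2]
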